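/- Let H be a Hilbert space and S ∈ B(H) a proper isometry (S*S = 1 but SS* ≠ 1). Then the distance from S to the set {N + K : N normal, K compact} equals 1. -/

import Mathlib

open ContinuousLinearMap Metric

namespace HalmosAux

variable {H : Type*} [NormedAddCommGroup H] [InnerProductSpace ℂ H] [CompleteSpace H]

local notation "⟪" x ", " y "⟫" => @inner ℂ _ _ x y

theorem norm_apply_of_isometry (S : H →L[ℂ] H) (hiso : (adjoint S).comp S = 1) (x : H) :
    ‖S x‖ = ‖x‖ := by
  have hx : adjoint S (S x) = x := by
    have := congrArg (fun T : H →L[ℂ] H => T x) hiso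
    simpa using this
  have h : ⟪S x, S x⟫ = ⟪x, x⟫ := by
    rw [← adjoint_inner_left, hx]
  rw [@norm_eq_sqrt_re_inner ℂ, @norm_eq_sqrt_re_inner ℂ, h]

theorem norm_adjoint_apply_of_normal (N : H →L[ℂ] H)
    (hn : (adjoint N).comp N = N.comp (adjoint N)) (x : H) :
    ‖adjoint N x‖ = ‖N x‖ := by
  have hx : adjoint N (N x) = N (adjoint N x) := by
    have := congrArg (fun T : H →L[ℂ] H => T x) hn
    simpa using this
  have h : ⟪adjoint N x, adjoint N x⟫ = ⟪N x, N x⟫ := by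
    rw [← adjoint_inner_left, adjoint_adjoint, ← hx, adjoint_inner_left]
  rw [@norm_eq_sqrt_re_inner ℂ, @norm_eq_sqrt_re_inner ℂ, h]

theorem dist_orthogonalProjection_le (U : Submodule ℂ H) [Submodule.HasOrthogonalProjection U]
    (z : H) {u : H} (hu : u ∈ U) :
    ‖z - (Submodule.orthogonalProjectionOnto U z : H)‖ ≤ ‖z - u‖ := by
  rw [← Submodule.starProjection_apply, Submodule.starProjection_minimal]
  exact ciInf_le ⟨0, by rintro _ ⟨w, rfl⟩; positivity⟩ (⟨u, hu⟩ : U)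

theorem exists_finiteRank_approx (K : H →L[ℂ] H) (hK : IsCompactOperator K) {ε : ℝ}
    (hε : 0 < ε) :
    ∃ F : H →L[ℂ] H, FiniteDimensional ℂ (LinearMap.range (F : H →ₗ[ℂ] H)) ∧ ‖K - F‖ ≤ ε := by
  have hK' : IsCompactOperator (K.toLinearMap : H →ₗ[ℂ] H) := hK
  obtain ⟨M, hMc, hMsub⟩ := hK'.image_closedBall_subset_compact (𝕜₁ := ℂ) 1
  have htb : TotallyBounded ((K : H → H) '' Metric.closedBall 0 1) :=
    hMc.totallyBounded.subset hMsub
  obtain ⟨t, htfin, htsub⟩ := (totallyBounded_iff.mp htb) (ε / 2) (by positivity)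
  set U : Submodule ℂ H := Submodule.span ℂ (t : Set H) with hU
  haveI : FiniteDimensional ℂ U := FiniteDimensional.span_of_finite ℂ htfin
  haveI : CompleteSpace U := FiniteDimensional.complete ℂ U
  set P : H →L[ℂ] H := U.subtypeL.comp (Submodule.orthogonalProjectionOnto U) with hP
  refine ⟨P.comp K, ?_, ?_⟩
  · refine Submodule.finiteDimensional_of_le (S₂ := U) ?_
    rintro _ ⟨x, rfl⟩
    exact (Submodule.orthogonalProjectionOnto U (K x)).2
  · refine opNorm_le_bound _ hε.le fun x => ?_
    rcases eq_or_ne x 0 with rfl | hx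
    · simp
    · have hnx : (0:ℝ) < ‖x‖ := norm_pos_iff.mpr hx
      set y : H := (‖x‖ : ℂ)⁻¹ • x with hy
      have hyn : ‖y‖ = 1 := by
        rw [hy, norm_smul]
        simp [norm_inv, hnx.ne']
      have hymem : y ∈ Metric.closedBall (0:H) 1 :=
        mem_closedBall_zero_iff.mpr hyn.le
      have : K y ∈ ⋃ z ∈ t, Metric.ball z (ε/2) := htsub ⟨y, hymem, rfl⟩
      obtain ⟨z, hzt, hz⟩ := Set.mem_iUnion₂.mp this
      have hzU : z ∈ U := Submodule.subset_span hzt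
      have hby : ‖(K - P.comp K) y‖ ≤ ε := by
        have : ‖K y - (Submodule.orthogonalProjectionOnto U (K y) : H)‖ ≤ ‖K y - z‖ :=
          dist_orthogonalProjection_le U (K y) hzU
        have hlt : ‖K y - z‖ < ε / 2 := by
          simpa [dist_eq_norm] using mem_ball_iff_norm.mp hz
        have : ‖K y - (Submodule.orthogonalProjectionOnto U (K y) : H)‖ ≤ ε := by
          nlinarith
        simpa [hP, sub_apply, comp_apply] using this
      have hxy : x = (‖x‖ : ℂ) • y := by
        rw [hy, smul_smul]
        rw [mul_inv_cancel₀ (by exact_mod_cast hnx.ne')]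
        simp
      calc ‖(K - P.comp K) x‖ = ‖(K - P.comp K) ((‖x‖ : ℂ) • y)‖ := by rw [← hxy]
        _ = ‖x‖ * ‖(K - P.comp K) y‖ := by
            rw [map_smul, norm_smul]; simp
        _ ≤ ‖x‖ * ε := by
            exact mul_le_mul_of_nonneg_left hby hnx.le
        _ = ε * ‖x‖ := mul_comm _ _

theorem finiteRank_adjoint (F : H →L[ℂ] H) (hF : FiniteDimensional ℂ (LinearMap.range (F : H →ₗ[ℂ] H))) :
    FiniteDimensional ℂ (LinearMap.range (((adjoint F) : H →L[ℂ] H) : H →ₗ[ℂ] H)) := by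
  set V : Submodule ℂ H := LinearMap.range (F : H →ₗ[ℂ] H) with hV
  haveI : CompleteSpace V := FiniteDimensional.complete ℂ V
  have hzero : ∀ z ∈ Vᗮ, adjoint F z = 0 := by
    intro z hz
    refine ext_inner_right ℂ fun w => ?_
    rw [adjoint_inner_left]
    rw [inner_zero_left]
    exact (Submodule.mem_orthogonal' V z).mp hz (F w) (LinearMap.mem_range_self _ w)
  have hle : LinearMap.range (((adjoint F) : H →L[ℂ] H) : H →ₗ[ℂ] H) ≤ Submodule.map (adjoint F : H →ₗ[ℂ] H) V := by
    rintro _ ⟨y, rfl⟩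
    have hdec : adjoint F y = adjoint F (Submodule.orthogonalProjectionOnto V y : H) := by
      have h0 : adjoint F (y - (Submodule.orthogonalProjectionOnto V y : H)) = 0 :=
        hzero _ (Submodule.sub_starProjection_mem_orthogonal y)
      have := map_sub (adjoint F) y (Submodule.orthogonalProjectionOnto V y : H)
      rw [h0] at this
      exact sub_eq_zero.mp this.symm
    exact ⟨_, (Submodule.orthogonalProjectionOnto V y).2, hdec.symm⟩
  haveI : FiniteDimensional ℂ (Submodule.map (adjoint F : H →ₗ[ℂ] H) V) :=
    Module.Finite.map V _
  exact Submodule.finiteDimensional_of_le hle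

theorem isClosed_coe_sup_finiteDimensional (C D : Submodule ℂ H) (hC : IsClosed (C : Set H))
    [FiniteDimensional ℂ D] : IsClosed ((C ⊔ D : Submodule ℂ H) : Set H) := by
  haveI : CompleteSpace C := hC.completeSpace_coe
  set Q : H →L[ℂ] H := C.subtypeL.comp (Submodule.orthogonalProjectionOnto C) with hQ
  have hQmem : ∀ x, Q x ∈ C := fun x => (Submodule.orthogonalProjectionOnto C x).2
  have hQself : ∀ c ∈ C, Q c = c := fun c hc => Submodule.starProjection_eq_self_iff.mpr hc
  have hQzero : ∀ d ∈ Cᗮ, Q d = 0 := fun d hd => by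
    have := Submodule.orthogonalProjectionOnto_apply_of_mem_orthogonal (K := C) hd
    simp [hQ, this]
  set D₂ : Submodule ℂ H := Submodule.map ((1 - Q : H →L[ℂ] H) : H →ₗ[ℂ] H) D with hD₂
  haveI : FiniteDimensional ℂ D₂ := Module.Finite.map D _
  have hD₂orth : ∀ d ∈ D₂, d ∈ Cᗮ := by
    rintro _ ⟨v, hv, rfl⟩
    simpa [hQ] using Submodule.sub_starProjection_mem_orthogonal (K := C) v
  have hsup : C ⊔ D = C ⊔ D₂ := by
    apply le_antisymm
    · refine sup_le le_sup_left fun d hd => ?_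
      have : d = Q d + (1 - Q) d := by simp
      rw [this]
      exact Submodule.add_mem_sup (hQmem d) ⟨d, hd, rfl⟩
    · refine sup_le le_sup_left ?_
      rintro _ ⟨v, hv, rfl⟩
      have : (((1 - Q : H →L[ℂ] H) : H →ₗ[ℂ] H)) v = (-(Q v)) + v := by
        simp; abel
      rw [this]
      exact Submodule.add_mem_sup (neg_mem (hQmem v)) hv
  have hset : ((C ⊔ D₂ : Submodule ℂ H) : Set H) = (fun x => x - Q x) ⁻¹' (D₂ : Set H) := by
    ext x
    constructor
    · intro hx
      obtain ⟨c, hc, d, hd, rfl⟩ := Submodule.mem_sup.mp hx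
      have heq : (c + d) - Q (c + d) = d := by
        rw [map_add, hQself c hc, hQzero d (hD₂orth d hd)]
        abel
      show c + d - Q (c + d) ∈ (D₂ : Set H)
      rw [heq]
      exact hd
    · intro hx
      simpa using Submodule.add_mem_sup (hQmem x) hx
  rw [hsup, hset]
  exact (D₂.closed_of_finiteDimensional).preimage (continuous_id.sub Q.continuous)

theorem isClosed_range_of_bddBelow_on_orthogonal (Nop : H →L[ℂ] H) (R : Submodule ℂ H)
    [FiniteDimensional ℂ R] {δ : ℝ} (hδ : 0 < δ) (hbb : ∀ x ∈ Rᗮ, δ * ‖x‖ ≤ ‖Nop x‖) :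
    IsClosed ((LinearMap.range (Nop : H →ₗ[ℂ] H) : Submodule ℂ H) : Set H) := by
  set W : Submodule ℂ H := Rᗮ with hW
  have hWclosed : IsClosed (W : Set H) := Submodule.isClosed_orthogonal R
  haveI : CompleteSpace W := hWclosed.completeSpace_coe
  set g : W →L[ℂ] H := Nop.comp W.subtypeL with hg
  have hganti : AntilipschitzWith (Real.toNNReal δ⁻¹) g := by
    apply g.antilipschitz_of_bound
    intro x
    rw [Real.coe_toNNReal _ (by positivity)]
    refine (le_inv_mul_iff₀ hδ).mpr ?_
    calc δ * ‖x‖ = δ * ‖(x : H)‖ := rfl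
      _ ≤ ‖Nop x‖ := hbb x x.2
      _ = ‖g x‖ := rfl
  have hrg : IsClosed (Set.range g) := hganti.isClosed_range g.uniformContinuous
  have hmapW : ((Submodule.map (Nop : H →ₗ[ℂ] H) W : Submodule ℂ H) : Set H) = Set.range g := by
    ext y
    constructor
    · rintro ⟨x, hx, rfl⟩; exact ⟨⟨x, hx⟩, rfl⟩
    · rintro ⟨⟨x, hx⟩, rfl⟩; exact ⟨x, hx, rfl⟩
  haveI : CompleteSpace R := FiniteDimensional.complete ℂ R
  have hWorth : Wᗮ = R := Submodule.orthogonal_orthogonal R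
  have hdecomp : LinearMap.range (Nop : H →ₗ[ℂ] H) =
      Submodule.map (Nop : H →ₗ[ℂ] H) W ⊔ Submodule.map (Nop : H →ₗ[ℂ] H) R := by
    have htop : W ⊔ Wᗮ = ⊤ := Submodule.sup_orthogonal_of_hasOrthogonalProjection
    rw [LinearMap.range_eq_map, ← htop, Submodule.map_sup, hWorth]
  rw [hdecomp]
  have hmapsEq : Submodule.map (Nop : H →ₗ[ℂ] H) R = Submodule.map (Nop : H →ₗ[ℂ] H) R := rfl
  haveI : FiniteDimensional ℂ (Submodule.map (Nop : H →ₗ[ℂ] H) R) := by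
    rw [hmapsEq]; exact Module.Finite.map R _
  apply isClosed_coe_sup_finiteDimensional
  rw [hmapW]
  exact hrg

theorem range_eq_orthogonal_ker (Nop : H →L[ℂ] H)
    (hnorm : ∀ x, ‖adjoint Nop x‖ = ‖Nop x‖)
    (hcl : IsClosed ((LinearMap.range (Nop : H →ₗ[ℂ] H) : Submodule ℂ H) : Set H)) :
    (LinearMap.range (Nop : H →ₗ[ℂ] H) : Submodule ℂ H) = (LinearMap.ker (Nop : H →ₗ[ℂ] H))ᗮ := by
  have hker : LinearMap.ker (((adjoint Nop) : H →L[ℂ] H) : H →ₗ[ℂ] H) = LinearMap.ker (Nop : H →ₗ[ℂ] H) := by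
    ext x
    simp only [LinearMap.mem_ker, ContinuousLinearMap.coe_coe]
    constructor <;> intro h
    · have := hnorm x; rw [h, norm_zero] at this; exact norm_eq_zero.mp this.symm
    · have := hnorm x; rw [h, norm_zero] at this; exact norm_eq_zero.mp this
  have horth : (LinearMap.range (Nop : H →ₗ[ℂ] H) : Submodule ℂ H)ᗮ = LinearMap.ker (((adjoint Nop) : H →L[ℂ] H) : H →ₗ[ℂ] H) := by
    ext z
    rw [Submodule.mem_orthogonal]
    constructor
    · intro h
      have : ∀ w, ⟪adjoint Nop z, w⟫ = 0 := fun w => by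
        rw [adjoint_inner_left]
        rw [inner_eq_zero_symm]
        exact h (Nop w) (LinearMap.mem_range_self _ w)
      simp only [LinearMap.mem_ker, ContinuousLinearMap.coe_coe]
      exact ext_inner_right ℂ fun w => by rw [this w, inner_zero_left]
    · intro h
      rintro _ ⟨w, rfl⟩
      have hz : adjoint Nop z = 0 := h
      rw [ContinuousLinearMap.coe_coe, inner_eq_zero_symm, ← adjoint_inner_left, hz, inner_zero_left]
  haveI : CompleteSpace (LinearMap.range (Nop : H →ₗ[ℂ] H) : Submodule ℂ H) := hcl.completeSpace_coe
  have := Submodule.orthogonal_orthogonal (LinearMap.range (Nop : H →ₗ[ℂ] H) : Submodule ℂ H)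
  rw [← this, horth, hker]

theorem isUnit_of_bijective {f : H →L[ℂ] H} (hinj : Function.Injective f)
    (hsurj : Function.Surjective f) : IsUnit f := by
  set e := ContinuousLinearEquiv.ofBijective f (LinearMap.ker_eq_bot.mpr hinj)
    (LinearMap.range_eq_top.mpr hsurj) with he
  refine ⟨⟨f, e.symm.toContinuousLinearMap, ?_, ?_⟩, rfl⟩
  · ext x
    show f (e.symm x) = x
    have : f (e.symm x) = e (e.symm x) := rfl
    rw [this, e.apply_symm_apply]
  · ext x
    show e.symm (f x) = x
    have : f x = e x := rfl
    rw [this, e.symm_apply_apply]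

theorem isUnit_add_proj (Nop : H →L[ℂ] H)
    (hnorm : ∀ x, ‖adjoint Nop x‖ = ‖Nop x‖)
    (hrange : (LinearMap.range (Nop : H →ₗ[ℂ] H) : Submodule ℂ H) = (LinearMap.ker (Nop : H →ₗ[ℂ] H))ᗮ)
    (hker : FiniteDimensional ℂ (LinearMap.ker (Nop : H →ₗ[ℂ] H) : Submodule ℂ H)) :
    ∃ P : H →L[ℂ] H, FiniteDimensional ℂ (LinearMap.range (P : H →ₗ[ℂ] H)) ∧ IsUnit (Nop + P) := by
  set κ : Submodule ℂ H := LinearMap.ker (Nop : H →ₗ[ℂ] H) with hκ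
  haveI : FiniteDimensional ℂ κ := hker
  haveI : CompleteSpace κ := FiniteDimensional.complete ℂ κ
  set P : H →L[ℂ] H := κ.subtypeL.comp (Submodule.orthogonalProjectionOnto κ) with hP
  have hPmem : ∀ x, P x ∈ κ := fun x => (Submodule.orthogonalProjectionOnto κ x).2
  have hPself : ∀ c ∈ κ, P c = c := fun c hc => Submodule.starProjection_eq_self_iff.mpr hc
  have hNP : ∀ x ∈ κ, Nop x = 0 := fun x hx => hx
  have hadj_ker : ∀ z ∈ κ, adjoint Nop z = 0 := by
    intro z hz
    have := hnorm z
    rw [hNP z hz, norm_zero] at this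
    exact norm_eq_zero.mp this
  have hNorth : ∀ x, Nop x ∈ κᗮ := by
    intro x
    rw [Submodule.mem_orthogonal']
    intro u hu
    rw [← adjoint_inner_right, hadj_ker _ hu, inner_zero_right]
  refine ⟨P, ?_, ?_⟩
  · exact Submodule.finiteDimensional_of_le (S₂ := κ) (by rintro _ ⟨x, rfl⟩; exact hPmem x)
  · have hinj : Function.Injective (Nop + P) := by
      intro x y hxy
      have h0 : (Nop + P) (x - y) = 0 := by rw [map_sub, hxy, sub_self]
      rw [add_apply] at h0
      have hNx : Nop (x - y) = 0 := by
        have hmem : Nop (x - y) ∈ κ := by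
          rw [eq_neg_of_add_eq_zero_left h0]
          exact neg_mem (hPmem _)
        have := (Submodule.mem_orthogonal' κ _).mp (hNorth (x - y)) _ hmem
        exact inner_self_eq_zero.mp this
      have hPx : P (x - y) = 0 := by rwa [hNx, zero_add] at h0
      have : x - y ∈ κ := hNx
      have := hPself _ this
      rw [hPx] at this
      have hxysub : x - y = 0 := this.symm
      exact sub_eq_zero.mp hxysub
    have hsurj : Function.Surjective (Nop + P) := by
      intro y
      have hy2 : y - P y ∈ κᗮ := by
        have := Submodule.sub_starProjection_mem_orthogonal (K := κ) y
        simpa [hP] using this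
      rw [← hrange] at hy2
      obtain ⟨x₀, hx₀⟩ := hy2
      refine ⟨x₀ - P x₀ + P y, ?_⟩
      rw [add_apply]
      have h1 : Nop (x₀ - P x₀ + P y) = Nop x₀ := by
        rw [map_add, map_sub, hNP _ (hPmem x₀), hNP _ (hPmem y)]
        abel
      have h2 : P (x₀ - P x₀ + P y) = P y := by
        rw [map_add, map_sub, hPself _ (hPmem x₀), hPself _ (hPmem y)]
        abel
      rw [h1, h2, ← ContinuousLinearMap.coe_coe Nop, hx₀]
      abel
    exact isUnit_of_bijective hinj hsurj

theorem surjective_one_add_finiteRank (R : H →L[ℂ] H)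
    (hR : FiniteDimensional ℂ (LinearMap.range (R : H →ₗ[ℂ] H) : Submodule ℂ H))
    (hinj : Function.Injective ((1 : H →L[ℂ] H) + R)) :
    Function.Surjective ((1 : H →L[ℂ] H) + R) := by
  set V : Submodule ℂ H := LinearMap.range (R : H →ₗ[ℂ] H) with hV
  haveI : FiniteDimensional ℂ V := hR
  have happ : ∀ x : H, ((1 : H →L[ℂ] H) + R) x = x + R x := fun x => by
    rw [add_apply, ContinuousLinearMap.one_apply]
  set ψ : V →ₗ[ℂ] V :=
    LinearMap.id + ((R : H →ₗ[ℂ] H).domRestrict V).codRestrict V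
      (fun v => LinearMap.mem_range_self (R : H →ₗ[ℂ] H) (v : H)) with hψ
  have hψapp : ∀ v : V, ((ψ v : V) : H) = (v : H) + R (v : H) := fun v => rfl
  have hψinj : Function.Injective ψ := by
    intro v w hvw
    have : ((ψ v : V) : H) = ((ψ w : V) : H) := by rw [hvw]
    rw [hψapp, hψapp] at this
    have h1 : ((1 : H →L[ℂ] H) + R) (v : H) = ((1 : H →L[ℂ] H) + R) (w : H) := by
      rw [happ, happ]; exact this
    exact Subtype.ext (hinj h1)
  have hψsurj : Function.Surjective ψ := LinearMap.injective_iff_surjective.mp hψinj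
  intro y
  obtain ⟨v, hv⟩ := hψsurj (-(⟨R y, LinearMap.mem_range_self (R : H →ₗ[ℂ] H) y⟩ : V))
  refine ⟨y + (v : H), ?_⟩
  have hveq : ((ψ v : V) : H) = -(R y) := by rw [hv]; rfl
  rw [hψapp] at hveq
  rw [happ, map_add]
  have : (v : H) + R (v : H) + R y = 0 := by rw [hveq]; abel
  calc y + (v:H) + (R y + R (v:H)) = y + ((v:H) + R (v:H) + R y) := by abel
    _ = y := by rw [this]; abel

theorem isUnit_of_isometry_near_invertible [Nontrivial H] (S T : H →L[ℂ] H)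
    (hiso : ∀ x, ‖S x‖ = ‖x‖) (hT : IsUnit T) (hlt : ‖S - T‖ < 1) :
    IsUnit S := by
  haveI : Nontrivial (H →L[ℂ] H) := ⟨0, 1, by
    intro h
    obtain ⟨x, hx⟩ := exists_ne (0 : H)
    have h0 : (0 : H →L[ℂ] H) x = (1 : H →L[ℂ] H) x := by rw [h]
    rw [zero_apply, ContinuousLinearMap.one_apply] at h0
    exact hx h0.symm⟩
  set c := ‖S - T‖ with hc
  have hc0 : 0 ≤ c := norm_nonneg _
  have hc1 : c < 1 := hlt
  have hδ : (0:ℝ) < 1 - c := by linarith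
  set A : ℝ → (H →L[ℂ] H) := fun t => T + t • (S - T) with hA
  have hA1 : A 1 = S := by
    show T + (1:ℝ) • (S - T) = S
    rw [one_smul]; abel
  have hAeq : ∀ t : ℝ, A t = S - (1 - t) • (S - T) := by
    intro t
    show T + t • (S - T) = S - (1 - t) • (S - T)
    rw [sub_smul, one_smul]
    have hTX : T = S - (S - T) := by abel
    rw [hTX]; abel
  have hbb : ∀ t : ℝ, 0 ≤ t → t ≤ 1 → ∀ x, (1 - c) * ‖x‖ ≤ ‖A t x‖ := by
    intro t ht0 ht1 x
    have hop : ‖(S - T) x‖ ≤ c * ‖x‖ := (S - T).le_opNorm x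
    have h1 : ‖((1 - t) • (S - T)) x‖ ≤ (1 - t) * (c * ‖x‖) := by
      rw [smul_apply, norm_smul, Real.norm_eq_abs, abs_of_nonneg (by linarith : (0:ℝ) ≤ 1 - t)]
      exact mul_le_mul_of_nonneg_left hop (by linarith)
    have h2 : ‖S x‖ - ‖((1 - t) • (S - T)) x‖ ≤ ‖A t x‖ := by
      rw [hAeq t, sub_apply]
      exact norm_sub_norm_le _ _
    rw [hiso x] at h2
    nlinarith [norm_nonneg x, mul_nonneg (mul_nonneg ht0 hc0) (norm_nonneg x)]
  have hinv_bound : ∀ t : ℝ, 0 ≤ t → t ≤ 1 → ∀ u : (H →L[ℂ] H)ˣ, (u : H →L[ℂ] H) = A t →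
      ‖(↑u⁻¹ : H →L[ℂ] H)‖ ≤ (1 - c)⁻¹ := by
    intro t ht0 ht1 u hu
    refine opNorm_le_bound _ (by positivity) fun y => ?_
    have h2 := hbb t ht0 ht1 ((↑u⁻¹ : H →L[ℂ] H) y)
    have h3 : A t ((↑u⁻¹ : H →L[ℂ] H) y) = y := by
      rw [← hu]
      have h4 : (↑u : H →L[ℂ] H) ((↑u⁻¹ : H →L[ℂ] H) y)
          = ((↑u * ↑u⁻¹ : H →L[ℂ] H)) y := rfl
      rw [h4, u.mul_inv, ContinuousLinearMap.one_apply]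
    rw [h3] at h2
    exact (le_inv_mul_iff₀ hδ).mpr h2
  have hstep : ∀ t s : ℝ, 0 ≤ t → t ≤ 1 → 0 ≤ s → s ≤ 1 → |s - t| * c < 1 - c →
      IsUnit (A t) → IsUnit (A s) := by
    intro t s ht0 ht1 hs0 hs1 hdist hu
    obtain ⟨u, hu⟩ := hu
    have hb := hinv_bound t ht0 ht1 u hu
    have hpos : 0 < ‖(↑u⁻¹ : H →L[ℂ] H)‖ := Units.norm_pos u⁻¹
    have hnear : ‖A s - ↑u‖ < ‖(↑u⁻¹ : H →L[ℂ] H)‖⁻¹ := by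
      have hAd : A s - A t = (s - t) • (S - T) := by
        show (T + s • (S - T)) - (T + t • (S - T)) = (s - t) • (S - T)
        rw [sub_smul]; abel
      have h5 : ‖A s - ↑u‖ = |s - t| * c := by
        rw [hu, hAd, norm_smul, Real.norm_eq_abs]
      have h6 : (1 - c) ≤ ‖(↑u⁻¹ : H →L[ℂ] H)‖⁻¹ := by
        have h6' := one_div_le_one_div_of_le hpos hb
        rwa [one_div, one_div, inv_inv] at h6'
      linarith [h5, hdist]
    exact ⟨u.ofNearby (A s) hnear, rfl⟩
  obtain ⟨n, hn⟩ := exists_nat_gt (c / (1 - c))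
  have hnpos : 0 < (n : ℝ) := lt_of_le_of_lt (by positivity) hn
  have hstepsize : (n : ℝ)⁻¹ * c < 1 - c := by
    rw [div_lt_iff₀ hδ] at hn
    rw [inv_mul_eq_div, div_lt_iff₀ hnpos]
    linarith
  have hgrid : ∀ k : ℕ, k ≤ n → IsUnit (A ((k : ℝ) / n)) := by
    intro k
    induction k with
    | zero =>
      intro _
      have : ((0:ℕ) : ℝ) / n = 0 := by simp
      rw [this]
      have hA0 : A 0 = T := by
        show T + (0:ℝ) • (S - T) = T
        rw [zero_smul, add_zero]
      rw [hA0]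
      exact hT
    | succ k ih =>
      intro hk
      have hk' : (k : ℕ) ≤ n := le_of_lt (Nat.lt_of_succ_le hk)
      have hkn : (k : ℝ) ≤ n := by exact_mod_cast hk'
      have hk1n : ((k+1 : ℕ) : ℝ) ≤ n := by exact_mod_cast hk
      refine hstep ((k : ℝ)/n) (((k+1 : ℕ) : ℝ)/n) (by positivity) ?_ (by positivity) ?_ ?_ (ih hk')
      · exact div_le_one_of_le₀ hkn hnpos.le
      · exact div_le_one_of_le₀ hk1n hnpos.le
      · have hd : ((k+1 : ℕ) : ℝ)/n - (k : ℝ)/n = (n : ℝ)⁻¹ := by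
          push_cast
          field_simp
          ring
        rw [hd, abs_of_nonneg (by positivity)]
        exact hstepsize
  have hfin := hgrid n le_rfl
  have : ((n : ℝ) / n) = 1 := div_self hnpos.ne'
  rw [this, hA1] at hfin
  exact hfin


end HalmosAux

open ContinuousLinearMap Metric HalmosAux

/-- Halmos' lemma: a proper isometry on a Hilbert space has distance exactly 1
from the set of operators of the form "normal plus compact". -/
theorem halmos_dist_properIsometry_normal_plus_compact
    {H : Type*} [NormedAddCommGroup H] [InnerProductSpace ℂ H] [CompleteSpace H]
    (S : H →L[ℂ] H)
    (hiso : (ContinuousLinearMap.adjoint S).comp S = 1)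
    (hproper : S.comp (ContinuousLinearMap.adjoint S) ≠ 1) :
    Metric.infDist S
      {T : H →L[ℂ] H | ∃ N K : H →L[ℂ] H,
        (ContinuousLinearMap.adjoint N).comp N = N.comp (ContinuousLinearMap.adjoint N) ∧
        IsCompactOperator K ∧ T = N + K} = 1 := by
  haveI : Nontrivial H := by
    by_contra hcon
    rw [not_nontrivial_iff_subsingleton] at hcon
    exact hproper (Subsingleton.elim _ _)
  have hisoS : ∀ x, ‖S x‖ = ‖x‖ := norm_apply_of_isometry S hiso
  have h0mem : (0 : H →L[ℂ] H) ∈ {T : H →L[ℂ] H | ∃ N K : H →L[ℂ] H,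
      (ContinuousLinearMap.adjoint N).comp N = N.comp (ContinuousLinearMap.adjoint N) ∧
      IsCompactOperator K ∧ T = N + K} := by
    refine ⟨0, 0, ?_, isCompactOperator_zero, by simp⟩
    have h0 : ContinuousLinearMap.adjoint (0 : H →L[ℂ] H) = 0 := map_zero _
    rw [h0]
  have hSnorm : ‖S‖ = 1 := by
    apply le_antisymm
    · exact opNorm_le_bound _ zero_le_one fun x => by rw [hisoS x, one_mul]
    · obtain ⟨x, hx⟩ := exists_ne (0 : H)
      have h1 := S.ratio_le_opNorm x
      rwa [hisoS x, div_self (norm_ne_zero_iff.mpr hx)] at h1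
  have hupper : Metric.infDist S {T : H →L[ℂ] H | ∃ N K : H →L[ℂ] H,
      (ContinuousLinearMap.adjoint N).comp N = N.comp (ContinuousLinearMap.adjoint N) ∧
      IsCompactOperator K ∧ T = N + K} ≤ 1 := by
    have h11 := Metric.infDist_le_dist_of_mem (x := S) h0mem
    rwa [dist_zero_right, hSnorm] at h11
  have hlower : ¬ Metric.infDist S {T : H →L[ℂ] H | ∃ N K : H →L[ℂ] H,
      (ContinuousLinearMap.adjoint N).comp N = N.comp (ContinuousLinearMap.adjoint N) ∧
      IsCompactOperator K ∧ T = N + K} < 1 := by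
    intro hconlt
    obtain ⟨T, hTmem, hTd⟩ := (Metric.infDist_lt_iff ⟨0, h0mem⟩).mp hconlt
    obtain ⟨N, K, hnormal, hKcomp, rfl⟩ := hTmem
    rw [dist_eq_norm] at hTd
    set c₀ := ‖S - (N + K)‖ with hc₀
    have hε : (0:ℝ) < (1 - c₀)/2 := by linarith
    obtain ⟨F, hFfin, hFK⟩ := exists_finiteRank_approx K hKcomp hε
    set T' : H →L[ℂ] H := N + F with hT'
    have hc1 : ‖S - T'‖ < 1 := by
      have hsplit : S - T' = (S - (N + K)) + (K - F) := by rw [hT']; abel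
      calc ‖S - T'‖ ≤ ‖S - (N+K)‖ + ‖K - F‖ := by rw [hsplit]; exact norm_add_le _ _
        _ < 1 := by linarith
    set c : ℝ := ‖S - T'‖ with hcdef
    set δ : ℝ := 1 - c with hδdef
    have hδ : (0:ℝ) < δ := by rw [hδdef]; linarith
    have hbbT' : ∀ x, δ * ‖x‖ ≤ ‖T' x‖ := by
      intro x
      have h1 : ‖(S - T') x‖ ≤ c * ‖x‖ := (S - T').le_opNorm x
      have h2 : ‖S x‖ - ‖(S - T') x‖ ≤ ‖T' x‖ := by
        have h3 : T' x = S x - (S - T') x := by rw [sub_apply]; abel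
        rw [h3]; exact norm_sub_norm_le _ _
      rw [hisoS x] at h2
      rw [hδdef, sub_mul, one_mul]
      linarith
    have hT'inj : Function.Injective T' := by
      intro x y hxy
      have h0 : T' (x - y) = 0 := by rw [map_sub, hxy, sub_self]
      have h4 := hbbT' (x - y)
      rw [h0, norm_zero] at h4
      have h5 : ‖x - y‖ ≤ 0 := by nlinarith
      exact sub_eq_zero.mp (norm_le_zero_iff.mp h5)
    haveI hFfin' : FiniteDimensional ℂ (LinearMap.range (F : H →ₗ[ℂ] H) : Submodule ℂ H) := hFfin
    haveI hkerN : FiniteDimensional ℂ (LinearMap.ker (N : H →ₗ[ℂ] H) : Submodule ℂ H) := by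
      set φ : (LinearMap.ker (N : H →ₗ[ℂ] H) : Submodule ℂ H) →ₗ[ℂ] (LinearMap.range (F : H →ₗ[ℂ] H) : Submodule ℂ H) :=
        ((F : H →ₗ[ℂ] H).domRestrict (LinearMap.ker (N : H →ₗ[ℂ] H))).codRestrict (LinearMap.range (F : H →ₗ[ℂ] H))
          (fun v => LinearMap.mem_range_self _ _) with hφ
      have hφinj : Function.Injective φ := by
        intro v w hvw
        have hFv : F (v : H) = F (w : H) := congrArg Subtype.val hvw
        have hNv : N (v : H) = 0 := v.2
        have hNw : N (w : H) = 0 := w.2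
        have hT'vw : T' (v : H) = T' (w : H) := by
          rw [hT', add_apply, add_apply, hNv, hNw, hFv]
        exact Subtype.ext (hT'inj hT'vw)
      exact FiniteDimensional.of_injective φ hφinj
    have hNnorm := norm_adjoint_apply_of_normal N hnormal
    haveI hRfin : FiniteDimensional ℂ
        (LinearMap.range (((ContinuousLinearMap.adjoint F) : H →L[ℂ] H) : H →ₗ[ℂ] H) : Submodule ℂ H) :=
      finiteRank_adjoint F hFfin
    have hbbN : ∀ x ∈ (LinearMap.range (((ContinuousLinearMap.adjoint F) : H →L[ℂ] H) : H →ₗ[ℂ] H) : Submodule ℂ H)ᗮ,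
        δ * ‖x‖ ≤ ‖N x‖ := by
      intro x hx
      have hFx : F x = 0 := by
        refine ext_inner_right ℂ fun v => ?_
        rw [inner_zero_left, ← adjoint_inner_right]
        exact (Submodule.mem_orthogonal' _ x).mp hx _ (LinearMap.mem_range_self _ v)
      have h6 : T' x = N x := by rw [hT', add_apply, hFx, add_zero]
      rw [← h6]
      exact hbbT' x
    have hclosed := isClosed_range_of_bddBelow_on_orthogonal N _ hδ hbbN
    have hrangeN := range_eq_orthogonal_ker N hNnorm hclosed
    obtain ⟨P, hPfin, hPunit⟩ := isUnit_add_proj N hNnorm hrangeN hkerN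
    obtain ⟨u, hu⟩ := hPunit
    set Rop : H →L[ℂ] H := (↑u⁻¹ : H →L[ℂ] H) * (F - P) with hRop
    haveI hFP : FiniteDimensional ℂ (LinearMap.range (((F - P) : H →L[ℂ] H) : H →ₗ[ℂ] H) : Submodule ℂ H) := by
      haveI := Submodule.finiteDimensional_sup (LinearMap.range (F : H →ₗ[ℂ] H)) (LinearMap.range (P : H →ₗ[ℂ] H))
      apply Submodule.finiteDimensional_of_le
        (S₂ := LinearMap.range (F : H →ₗ[ℂ] H) ⊔ LinearMap.range (P : H →ₗ[ℂ] H))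
      rintro _ ⟨x, rfl⟩
      have h7 : (F - P) x = F x - P x := by rw [sub_apply]
      rw [ContinuousLinearMap.coe_coe, h7]
      exact sub_mem (Submodule.mem_sup_left (LinearMap.mem_range_self _ x))
        (Submodule.mem_sup_right (LinearMap.mem_range_self _ x))
    have hRopfin : FiniteDimensional ℂ (LinearMap.range (Rop : H →ₗ[ℂ] H) : Submodule ℂ H) := by
      haveI : FiniteDimensional ℂ
          (Submodule.map ((↑u⁻¹ : H →L[ℂ] H) : H →ₗ[ℂ] H)
            (LinearMap.range (((F - P) : H →L[ℂ] H) : H →ₗ[ℂ] H)) : Submodule ℂ H) :=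
        Module.Finite.map _ _
      apply Submodule.finiteDimensional_of_le
        (S₂ := Submodule.map ((↑u⁻¹ : H →L[ℂ] H) : H →ₗ[ℂ] H) (LinearMap.range (((F - P) : H →L[ℂ] H) : H →ₗ[ℂ] H)))
      rintro _ ⟨x, rfl⟩
      exact ⟨(F - P) x, LinearMap.mem_range_self _ x, rfl⟩
    have hprod : (↑u : H →L[ℂ] H) * ((1 : H →L[ℂ] H) + Rop) = T' := by
      rw [mul_add, mul_one, hRop, Units.mul_inv_cancel_left, hu, hT']
      abel
    have happmul : ∀ x, T' x = (↑u : H →L[ℂ] H) (((1 : H →L[ℂ] H) + Rop) x) := by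
      intro x
      rw [← hprod]
      rfl
    have h1Rinj : Function.Injective ((1 : H →L[ℂ] H) + Rop) := by
      intro x y hxy
      apply hT'inj
      rw [happmul x, happmul y, hxy]
    have h1Rsurj := surjective_one_add_finiteRank Rop hRopfin h1Rinj
    have h1Runit : IsUnit ((1 : H →L[ℂ] H) + Rop) := isUnit_of_bijective h1Rinj h1Rsurj
    have hT'unit : IsUnit T' := by
      rw [← hprod]
      exact u.isUnit.mul h1Runit
    have hSunit := isUnit_of_isometry_near_invertible S T' hisoS hT'unit hc1
    obtain ⟨v, hv⟩ := hSunit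
    have hSsurj : Function.Surjective S := by
      intro y
      refine ⟨(↑v⁻¹ : H →L[ℂ] H) y, ?_⟩
      have h8 : S ((↑v⁻¹ : H →L[ℂ] H) y) = ((↑v * ↑v⁻¹ : H →L[ℂ] H)) y := by rw [hv]; rfl
      rw [h8, v.mul_inv, ContinuousLinearMap.one_apply]
    apply hproper
    ext x
    obtain ⟨y, rfl⟩ := hSsurj x
    have h9 : ContinuousLinearMap.adjoint S (S y) = y := by
      have h10 := congrArg (fun T : H →L[ℂ] H => T y) hiso
      simpa using h10
    show S (ContinuousLinearMap.adjoint S (S y)) = (1 : H →L[ℂ] H) (S y)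
    rw [h9, ContinuousLinearMap.one_apply]
  linarith [not_lt.mp hlower, hupper]
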